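/- Let q be a real number with 0 < q < 1, ν₀ a nonzero real number, and c₀, d₀ complex numbers. On the ℂ-vector space of Laurent polynomials in one variable ζ over ℂ, define the ℂ-linear operators: X(ζ^k) = ν₀ q^{-2k} ζ^k for all k ∈ ℤ, Z = multiplication by ζ, Z' = multiplication by ζ^{-1}, Y = Z∘(q^{-1}X − c₀·id), and Ŷ = −Z'∘(qX − d₀·id). Then: Y∘X = q²·X∘Y; Ŷ∘X = q^{-2}·X∘Ŷ; Ŷ∘Y = −(q^{-1}X − c₀·id)∘(q^{-1}X − d₀·id); and Y∘Ŷ = −(qX − c₀·id)∘(qX − d₀·id). -/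

import Mathlib

open LaurentPolynomial

private lemma lhext' {f g : LaurentPolynomial ℂ →ₗ[ℂ] LaurentPolynomial ℂ}
    (h : ∀ k : ℤ, f (T k) = g (T k)) : f = g := by
  refine AddMonoidAlgebra.lhom_ext' fun k => LinearMap.ext fun a => ?_
  have hs : (AddMonoidAlgebra.single k a : LaurentPolynomial ℂ) = a • T k := by
    rw [T, AddMonoidAlgebra.smul_single', mul_one]
  simp [AddMonoidAlgebra.lsingle, hs, h k]

/-- the operators `X`, `Y = Z∘(q⁻¹X − c₀)`, `Ŷ = −Z'∘(qX − d₀)` on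
Laurent polynomials (with `Z`, `Z'` multiplication by `ζ`, `ζ⁻¹`) satisfy the
defining relations of the quantum algebra of functions on the quantum
hyperboloid `X_{c₀,d₀}`. -/
theorem quantum_hyperboloid_module_relations
    (q : ℝ) (hq0 : 0 < q) (hq1 : q < 1)
    (ν₀ : ℝ) (hν : ν₀ ≠ 0) (c₀ d₀ : ℂ)
    (X Z Z' Y Yh : LaurentPolynomial ℂ →ₗ[ℂ] LaurentPolynomial ℂ)
    (hX : ∀ k : ℤ, X (T k) = ((ν₀ : ℂ) * (q : ℂ) ^ (-(2 * k))) • T k)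
    (hZ : ∀ f : LaurentPolynomial ℂ, Z f = T 1 * f)
    (hZ' : ∀ f : LaurentPolynomial ℂ, Z' f = T (-1) * f)
    (hY : Y = Z ∘ₗ (((q : ℂ))⁻¹ • X - c₀ • LinearMap.id))
    (hYh : Yh = -(Z' ∘ₗ ((q : ℂ) • X - d₀ • LinearMap.id))) :
    Y ∘ₗ X = ((q : ℂ) ^ 2) • (X ∘ₗ Y) ∧
    Yh ∘ₗ X = ((q : ℂ) ^ 2)⁻¹ • (X ∘ₗ Yh) ∧
    Yh ∘ₗ Y =
      -((((q : ℂ))⁻¹ • X - c₀ • LinearMap.id) ∘ₗ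
        (((q : ℂ))⁻¹ • X - d₀ • LinearMap.id)) ∧
    Y ∘ₗ Yh =
      -(((q : ℂ) • X - c₀ • LinearMap.id) ∘ₗ
        ((q : ℂ) • X - d₀ • LinearMap.id)) := by
  have hq : (q : ℂ) ≠ 0 := by exact_mod_cast hq0.ne'
  set s : ℤ → ℂ := fun k => (ν₀ : ℂ) * (q : ℂ) ^ (-(2 * k)) with hsdef
  have hXs : ∀ k : ℤ, X (T k) = s k • T k := hX
  have hstep : ∀ k : ℤ, (q : ℂ) ^ 2 * s (k + 1) = s k := by
    intro k
    have h1 : (-(2 * (k + 1)) : ℤ) = -(2 * k) + (-2) := by ring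
    simp only [hsdef, h1, zpow_add₀ hq]
    have h3 : (q : ℂ) ^ 2 * (q : ℂ) ^ (-2 : ℤ) = 1 := by
      rw [← zpow_natCast (q : ℂ) 2, ← zpow_add₀ hq]; norm_num
    linear_combination ((ν₀ : ℂ) * (q : ℂ) ^ (-(2 * k))) * h3
  have hYT : ∀ k : ℤ, Y (T k) = (((q : ℂ))⁻¹ * s k - c₀) • T (k + 1) := by
    intro k
    rw [hY]
    simp only [LinearMap.comp_apply, LinearMap.sub_apply, LinearMap.smul_apply,
      LinearMap.id_apply, hXs k, smul_smul, ← sub_smul, map_smul, hZ,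
      mul_smul_comm, ← T_add]
    ring_nf
  have hYhT : ∀ k : ℤ, Yh (T k) = -((((q : ℂ)) * s k - d₀) • T (k - 1)) := by
    intro k
    rw [hYh]
    simp only [LinearMap.neg_apply, LinearMap.comp_apply, LinearMap.sub_apply,
      LinearMap.smul_apply, LinearMap.id_apply, hXs k, smul_smul, ← sub_smul,
      map_smul, hZ', mul_smul_comm, ← T_add]
    ring_nf
  refine ⟨?_, ?_, ?_, ?_⟩
  · apply lhext'; intro k
    simp only [LinearMap.comp_apply, LinearMap.smul_apply, hXs, hYT, map_smul,
      smul_smul]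
    congr 1
    rw [← hstep k]; ring
  · apply lhext'; intro k
    simp only [LinearMap.comp_apply, LinearMap.smul_apply, hXs, hYhT, map_smul,
      map_neg, smul_neg, smul_smul]
    congr 2
    rw [← hstep (k - 1), sub_add_cancel]; field_simp
  · apply lhext'; intro k
    simp only [LinearMap.comp_apply, LinearMap.neg_apply, LinearMap.sub_apply,
      LinearMap.smul_apply, LinearMap.id_apply, hXs, hYT, hYhT, map_smul,
      smul_smul, add_sub_cancel_right, smul_neg, ← sub_smul, neg_smul]
    congr 2
    rw [← hstep k]; field_simp
  · apply lhext'; intro k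
    simp only [LinearMap.comp_apply, LinearMap.neg_apply, LinearMap.sub_apply,
      LinearMap.smul_apply, LinearMap.id_apply, hXs, hYT, hYhT, map_smul,
      map_neg, smul_neg, smul_smul, sub_add_cancel, ← sub_smul, neg_smul]
    congr 2
    rw [← hstep (k - 1), sub_add_cancel]; field_simp
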